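/- Let O be a Hermitian 2^n × 2^n matrix and let 0 ≤ κ ≤ 2n. Then Tr((O ⊗ O) · Q_κ^0) = (−1)^{⌊κ/2⌋} · binom(2n, κ)^{−1/2} · P_κ(O), where P_κ(O) = 2^{−n} Σ_{|s|=κ} |Tr(O c^s)|² is the κ-purity of O. -/

import Mathlib

open Matrix Complex
open scoped Kronecker

noncomputable section

abbrev QIdx (n : ℕ) := Fin n → Fin 2
abbrev NMat (n : ℕ) := Matrix (QIdx n) (QIdx n) ℂ
abbrev NMat2 (n : ℕ) := Matrix (QIdx n × QIdx n) (QIdx n × QIdx n) ℂ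

/-- The 2×2 Pauli X matrix. -/
def σX : Matrix (Fin 2) (Fin 2) ℂ := !![0, 1; 1, 0]
/-- The 2×2 Pauli Y matrix. -/
def σY : Matrix (Fin 2) (Fin 2) ℂ := !![0, -Complex.I; Complex.I, 0]
/-- The 2×2 Pauli Z matrix. -/
def σZ : Matrix (Fin 2) (Fin 2) ℂ := !![1, 0; 0, -1]

/-- Tensor (Kronecker) product of `n` one-qubit matrices, realized on index type `Fin n → Fin 2`. -/
def tensor {n : ℕ} (M : Fin n → Matrix (Fin 2) (Fin 2) ℂ) : NMat n :=
  Matrix.of fun f g => ∏ i, M i (f i) (g i)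

/-- The Jordan–Wigner Majorana operator `c_μ` (0-based index: `c_{2i} = Z^{⊗i} X I…`,
`c_{2i+1} = Z^{⊗i} Y I…`). -/
def majorana (n : ℕ) (μ : Fin (2 * n)) : NMat n :=
  tensor fun j =>
    if (j : ℕ) < (μ : ℕ) / 2 then σZ
    else if (j : ℕ) = (μ : ℕ) / 2 then (if (μ : ℕ) % 2 = 0 then σX else σY)
    else 1

/-- Ordered product `c^s` of the Majorana operators indexed by a subset `s`. -/
def cProd (n : ℕ) (s : Finset (Fin (2 * n))) : NMat n :=
  ((s.sort (· ≤ ·)).map (majorana n)).prod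

/-- The module `B_κ`: the complex span of products of `κ` distinct Majoranas. -/
def Bspace (n κ : ℕ) : Submodule ℂ (NMat n) :=
  Submodule.span ℂ {M | ∃ s : Finset (Fin (2 * n)), s.card = κ ∧ M = cProd n s}

/-- The Pauli string with `Z` on qubit `j` and identity elsewhere. -/
def pauliZ (n : ℕ) (j : Fin n) : NMat n := tensor fun k => if k = j then σZ else 1

/-- The Pauli string with `X` on qubits `j` and `j+1` and identity elsewhere. -/
def pauliXX (n : ℕ) (j : Fin n) : NMat n :=
  tensor fun k => if (k : ℕ) = (j : ℕ) ∨ (k : ℕ) = (j : ℕ) + 1 then σX else 1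

/-- The parity operator `P = Z^{⊗n}`. -/
def parity (n : ℕ) : NMat n := tensor fun _ => σZ


/-- Normalization constant `(d √C(2n,κ))⁻¹` with `d = 2^n`. -/
def Qnorm (n κ : ℕ) : ℂ := ((2 ^ n : ℂ) * ((Real.sqrt (Nat.choose (2 * n) κ) : ℝ) : ℂ))⁻¹

/-- The quadratic symmetry `Q_κ^0 = (d √C(2n,κ))⁻¹ Σ_{|s|=κ} c^s ⊗ c^s`. -/
def Q0 (n κ : ℕ) : NMat2 n :=
  Qnorm n κ • ∑ s ∈ Finset.powersetCard κ (Finset.univ : Finset (Fin (2 * n))),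
    (cProd n s) ⊗ₖ (cProd n s)

/-- The sum of the (1-based) elements of `s`, i.e. `π(s)`. -/
def piSum (n : ℕ) (s : Finset (Fin (2 * n))) : ℕ := ∑ μ ∈ s, ((μ : ℕ) + 1)

/-- The quadratic symmetry
`Q_κ^1 = (d √C(2n,κ))⁻¹ (−i)^n i^{κ mod 2} Σ_{|s|=κ} (−1)^{π(s)} c^s ⊗ c^{s̄}`. -/
def Q1 (n κ : ℕ) : NMat2 n :=
  (Qnorm n κ * (-Complex.I) ^ n * Complex.I ^ (κ % 2)) •
    ∑ s ∈ Finset.powersetCard κ (Finset.univ : Finset (Fin (2 * n))),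
      ((-1 : ℂ)) ^ (piSum n s) • ((cProd n s) ⊗ₖ (cProd n sᶜ))

/-- The matchgate circuit generators `{Z_j} ∪ {X_j X_{j+1}}`. -/
def matchgateGens (n : ℕ) : Set (NMat n) :=
  {M | ∃ j : Fin n, M = pauliZ n j} ∪
  {M | ∃ j : Fin n, (j : ℕ) + 1 < n ∧ M = pauliXX n j}

/-- The two-copy representation `H ⊗ I + I ⊗ H` of a generator `H`. -/
def bigH (n : ℕ) (H : NMat n) : NMat2 n :=
  H ⊗ₖ (1 : NMat n) + (1 : NMat n) ⊗ₖ H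

/-- The `κ`-purity `P_κ(M) = 2^{−n} Σ_{|s|=κ} |Tr(M c^s)|²`. -/
def purity (n κ : ℕ) (M : NMat n) : ℝ :=
  (2 ^ n : ℝ)⁻¹ * ∑ s ∈ Finset.powersetCard κ (Finset.univ : Finset (Fin (2 * n))),
    ‖Matrix.trace (M * cProd n s)‖ ^ 2

lemma tensor_mul {n : ℕ} (M N : Fin n → Matrix (Fin 2) (Fin 2) ℂ) :
    tensor M * tensor N = tensor (fun i => M i * N i) := by
  ext f g
  simp only [tensor, Matrix.mul_apply, Matrix.of_apply]
  have h1 : ∀ (j : QIdx n), (∏ i, M i (f i) (j i)) * ∏ i, N i (j i) (g i)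
      = ∏ i, (M i (f i) (j i) * N i (j i) (g i)) := fun j => (Finset.prod_mul_distrib).symm
  simp_rw [h1]
  rw [Finset.prod_univ_sum (t := fun _ => (Finset.univ : Finset (Fin 2)))
      (f := fun x j => M x (f x) j * N x j (g x)), Fintype.piFinset_univ]

lemma tensor_conjTranspose {n : ℕ} (M : Fin n → Matrix (Fin 2) (Fin 2) ℂ) :
    (tensor M)ᴴ = tensor (fun i => (M i)ᴴ) := by
  ext f g
  simp [tensor, Matrix.conjTranspose_apply, map_prod]


def mfac (n : ℕ) (μ : Fin (2 * n)) : Fin n → Matrix (Fin 2) (Fin 2) ℂ := fun j =>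
  if (j : ℕ) < (μ : ℕ) / 2 then σZ
  else if (j : ℕ) = (μ : ℕ) / 2 then (if (μ : ℕ) % 2 = 0 then σX else σY)
  else 1

lemma pXZ : σX * σZ = -(σZ * σX) := by
  ext i j; fin_cases i <;> fin_cases j <;>
    simp [σX, σZ, Matrix.mul_apply, Fin.sum_univ_two]
lemma pYZ : σY * σZ = -(σZ * σY) := by
  ext i j; fin_cases i <;> fin_cases j <;>
    simp [σY, σZ, Matrix.mul_apply, Fin.sum_univ_two]
lemma pXY : σX * σY = -(σY * σX) := by
  ext i j; fin_cases i <;> fin_cases j <;>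
    simp [σX, σY, Matrix.mul_apply, Fin.sum_univ_two]

lemma mfac_hermitian (n : ℕ) (μ : Fin (2 * n)) (j : Fin n) : (mfac n μ j)ᴴ = mfac n μ j := by
  unfold mfac
  split_ifs <;>
    first
    | (ext a b; fin_cases a <;> fin_cases b <;>
        simp [σX, σY, σZ, Matrix.conjTranspose_apply])
    | simp

lemma anticomm_aux {n : ℕ} (μ ν : Fin (2 * n)) (h : μ ≠ ν) (j : Fin n) :
    mfac n μ j * mfac n ν j
      = (if (j : ℕ) = min ((μ : ℕ) / 2) ((ν : ℕ) / 2) then (-1 : ℂ) else 1)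
          • (mfac n ν j * mfac n μ j) := by
  have hμν : (μ : ℕ) ≠ (ν : ℕ) := fun hc => h (Fin.ext hc)
  unfold mfac
  rcases Nat.lt_trichotomy (j : ℕ) ((μ : ℕ) / 2) with hp | hp | hp <;>
    rcases Nat.lt_trichotomy (j : ℕ) ((ν : ℕ) / 2) with hq | hq | hq
  · rw [if_pos hp, if_pos hq,
      if_neg (show ¬ (j:ℕ) = min ((μ:ℕ)/2) ((ν:ℕ)/2) by omega), one_smul]
  · rw [if_pos hp, if_neg (show ¬ (j:ℕ) < (ν:ℕ)/2 by omega), if_pos hq,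
      if_pos (show (j:ℕ) = min ((μ:ℕ)/2) ((ν:ℕ)/2) by omega), neg_one_smul]
    split_ifs
    · rw [pXZ, neg_neg]
    · rw [pYZ, neg_neg]
  · rw [if_pos hp, if_neg (show ¬ (j:ℕ) < (ν:ℕ)/2 by omega),
      if_neg (show ¬ (j:ℕ) = (ν:ℕ)/2 by omega),
      if_neg (show ¬ (j:ℕ) = min ((μ:ℕ)/2) ((ν:ℕ)/2) by omega), one_smul, mul_one, one_mul]
  · rw [if_neg (show ¬ (j:ℕ) < (μ:ℕ)/2 by omega), if_pos hp, if_pos hq,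
      if_pos (show (j:ℕ) = min ((μ:ℕ)/2) ((ν:ℕ)/2) by omega), neg_one_smul]
    split_ifs
    · exact pXZ
    · exact pYZ
  · have hmm : (μ:ℕ) % 2 ≠ (ν:ℕ) % 2 := by omega
    rw [if_neg (show ¬ (j:ℕ) < (μ:ℕ)/2 by omega), if_pos hp,
      if_neg (show ¬ (j:ℕ) < (ν:ℕ)/2 by omega), if_pos hq,
      if_pos (show (j:ℕ) = min ((μ:ℕ)/2) ((ν:ℕ)/2) by omega), neg_one_smul]
    rcases Nat.mod_two_eq_zero_or_one (μ:ℕ) with h4 | h4 <;>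
      rcases Nat.mod_two_eq_zero_or_one (ν:ℕ) with h5 | h5
    · omega
    · rw [if_pos h4, if_neg (show ¬ (ν:ℕ)%2 = 0 by omega)]; exact pXY
    · rw [if_neg (show ¬ (μ:ℕ)%2 = 0 by omega), if_pos h5, pXY, neg_neg]
    · omega
  · rw [if_neg (show ¬ (j:ℕ) < (μ:ℕ)/2 by omega), if_pos hp,
      if_neg (show ¬ (j:ℕ) < (ν:ℕ)/2 by omega), if_neg (show ¬ (j:ℕ) = (ν:ℕ)/2 by omega),
      if_neg (show ¬ (j:ℕ) = min ((μ:ℕ)/2) ((ν:ℕ)/2) by omega), one_smul, mul_one, one_mul]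
  · rw [if_neg (show ¬ (j:ℕ) < (μ:ℕ)/2 by omega), if_neg (show ¬ (j:ℕ) = (μ:ℕ)/2 by omega),
      if_pos hq, if_neg (show ¬ (j:ℕ) = min ((μ:ℕ)/2) ((ν:ℕ)/2) by omega), one_smul,
      mul_one, one_mul]
  · rw [if_neg (show ¬ (j:ℕ) < (μ:ℕ)/2 by omega), if_neg (show ¬ (j:ℕ) = (μ:ℕ)/2 by omega),
      if_neg (show ¬ (j:ℕ) < (ν:ℕ)/2 by omega), if_pos hq,
      if_neg (show ¬ (j:ℕ) = min ((μ:ℕ)/2) ((ν:ℕ)/2) by omega), one_smul, mul_one, one_mul]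
  · rw [if_neg (show ¬ (j:ℕ) < (μ:ℕ)/2 by omega), if_neg (show ¬ (j:ℕ) = (μ:ℕ)/2 by omega),
      if_neg (show ¬ (j:ℕ) < (ν:ℕ)/2 by omega), if_neg (show ¬ (j:ℕ) = (ν:ℕ)/2 by omega),
      if_neg (show ¬ (j:ℕ) = min ((μ:ℕ)/2) ((ν:ℕ)/2) by omega), one_smul]

lemma majorana_eq (n : ℕ) (μ : Fin (2 * n)) : majorana n μ = tensor (mfac n μ) := rfl

lemma majorana_hermitian (n : ℕ) (μ : Fin (2 * n)) : (majorana n μ)ᴴ = majorana n μ := by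
  rw [majorana_eq, tensor_conjTranspose]
  exact congrArg tensor (funext fun j => mfac_hermitian n μ j)

lemma majorana_anticomm {n : ℕ} (μ ν : Fin (2 * n)) (h : μ ≠ ν) :
    majorana n μ * majorana n ν = -(majorana n ν * majorana n μ) := by
  have hm : min ((μ : ℕ) / 2) ((ν : ℕ) / 2) < n := by
    have := μ.isLt; omega
  rw [majorana_eq, majorana_eq, tensor_mul, tensor_mul]
  ext f g
  simp only [tensor, Matrix.of_apply, Matrix.neg_apply]
  calc ∏ i : Fin n, (mfac n μ i * mfac n ν i) (f i) (g i)
      = ∏ i : Fin n, ((if (i : ℕ) = min ((μ : ℕ) / 2) ((ν : ℕ) / 2) then (-1 : ℂ) else 1)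
          * (mfac n ν i * mfac n μ i) (f i) (g i)) := by
        refine Finset.prod_congr rfl fun i _ => ?_
        rw [anticomm_aux μ ν h i, Matrix.smul_apply, smul_eq_mul]
    _ = (∏ i : Fin n, (if (i : ℕ) = min ((μ : ℕ) / 2) ((ν : ℕ) / 2) then (-1 : ℂ) else 1))
          * ∏ i : Fin n, (mfac n ν i * mfac n μ i) (f i) (g i) := Finset.prod_mul_distrib
    _ = -∏ i : Fin n, (mfac n ν i * mfac n μ i) (f i) (g i) := by
        have hprod : (∏ i : Fin n, (if (i : ℕ) = min ((μ : ℕ) / 2) ((ν : ℕ) / 2)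
            then (-1 : ℂ) else 1)) = -1 := by
          have h2 : ∀ i : Fin n,
              ((i : ℕ) = min ((μ : ℕ) / 2) ((ν : ℕ) / 2)) = (i = ⟨_, hm⟩) := by
            intro i
            rw [eq_iff_iff, Fin.ext_iff]
        
          simp_rw [h2]
          rw [Finset.prod_ite_eq' Finset.univ]
          simp
        rw [hprod, neg_one_mul]

lemma prod_mul_anticomm {n : ℕ} (a : NMat n) :
    ∀ (l : List (NMat n)), (∀ b ∈ l, a * b = -(b * a)) →
      l.prod * a = ((-1 : ℂ)) ^ l.length • (a * l.prod)
  | [], _ => by simp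
  | b :: l, h => by
    have hb : a * b = -(b * a) := h b List.mem_cons_self
    have ih := prod_mul_anticomm a l (fun c hc => h c (List.mem_cons_of_mem b hc))
    simp only [List.prod_cons, List.length_cons]
    rw [mul_assoc, ih, mul_smul_comm, ← mul_assoc,
      show b * a = -(a * b) by rw [hb, neg_neg], neg_mul, smul_neg, pow_succ,
      mul_neg_one, neg_smul, mul_assoc]

lemma reverse_prod_anticomm {n : ℕ} :
    ∀ (l : List (NMat n)), l.Pairwise (fun A B => A * B = -(B * A)) →
      l.reverse.prod = ((-1 : ℂ)) ^ (l.length.choose 2) • l.prod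
  | [], _ => by simp
  | a :: l, h => by
    rw [List.reverse_cons, List.prod_append, List.prod_singleton,
      reverse_prod_anticomm l h.of_cons, smul_mul_assoc,
      prod_mul_anticomm a l (fun b hb => (List.pairwise_cons.mp h).1 b hb),
      smul_smul, List.prod_cons, List.length_cons]
    congr 1
    rw [← pow_add]
    congr 1
    have h1 : (l.length + 1).choose 2 = l.length.choose 1 + l.length.choose 2 := rfl
    have h2 : l.length.choose 1 = l.length := Nat.choose_one_right _
    omega

lemma cProd_conjTranspose (n : ℕ) (s : Finset (Fin (2 * n))) :
    (cProd n s)ᴴ = ((-1 : ℂ)) ^ (s.card.choose 2) • cProd n s := by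
  unfold cProd
  rw [Matrix.conjTranspose_list_prod, List.map_map]
  have h1 : ((s.sort (· ≤ ·)).map (Matrix.conjTranspose ∘ majorana n))
      = (s.sort (· ≤ ·)).map (majorana n) :=
    List.map_congr_left (fun a _ => majorana_hermitian n a)
  rw [h1]
  have hpw : ((s.sort (· ≤ ·)).map (majorana n)).Pairwise (fun A B => A * B = -(B * A)) :=
    List.Pairwise.map _ (fun a b hab => majorana_anticomm a b hab) (s.sort_nodup (· ≤ ·))
  rw [reverse_prod_anticomm _ hpw, List.length_map, Finset.length_sort]

lemma sign_choose_two : ∀ κ : ℕ, ((-1 : ℂ)) ^ (κ.choose 2) = ((-1 : ℂ)) ^ (κ / 2)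
  | 0 => rfl
  | 1 => rfl
  | (k + 2) => by
    have h1 : (k + 2).choose 2 = k.choose 2 + (2 * k + 1) := by
      have e1 : (k + 2).choose 2 = (k + 1).choose 1 + (k.choose 1 + k.choose 2) := rfl
      rw [Nat.choose_one_right, Nat.choose_one_right] at e1
      omega
    have h2 : (k + 2) / 2 = k / 2 + 1 := by omega
    rw [h1, h2, pow_add, pow_add, sign_choose_two k,
      show ((-1 : ℂ)) ^ (2 * k) = 1 from Even.neg_one_pow ⟨k, by ring⟩, pow_one, one_mul,
      pow_succ]

lemma conj_trace_eq (n : ℕ) (s : Finset (Fin (2 * n))) (O : NMat n) (hO : O.IsHermitian) :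
    (starRingEnd ℂ) (Matrix.trace (O * cProd n s)) =
      ((-1 : ℂ)) ^ (s.card / 2) * Matrix.trace (O * cProd n s) := by
  have h1 : (starRingEnd ℂ) (Matrix.trace (O * cProd n s))
      = Matrix.trace ((O * cProd n s)ᴴ) := (Matrix.trace_conjTranspose _).symm
  rw [h1, Matrix.conjTranspose_mul, hO.eq, cProd_conjTranspose, smul_mul_assoc,
    Matrix.trace_smul, Matrix.trace_mul_comm, sign_choose_two, smul_eq_mul]

/-- For Hermitian `O`: `Tr((O ⊗ O) Q_κ^0) = (−1)^{⌊κ/2⌋} C(2n,κ)^{−1/2} P_κ(O)`. -/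
theorem trace_OO_Q0 (n : ℕ) (hn : 1 ≤ n) (κ : ℕ) (hκ : κ ≤ 2 * n)
    (O : NMat n) (hO : O.IsHermitian) :
    Matrix.trace ((O ⊗ₖ O) * Q0 n κ) =
      ((-1 : ℂ)) ^ (κ / 2) * (((Real.sqrt (Nat.choose (2 * n) κ) : ℝ) : ℂ))⁻¹ *
        ((purity n κ O : ℝ) : ℂ) := by
  classical
  have key : ∀ s ∈ Finset.powersetCard κ (Finset.univ : Finset (Fin (2 * n))),
      Matrix.trace ((O ⊗ₖ O) * ((cProd n s) ⊗ₖ (cProd n s)))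
        = ((-1 : ℂ)) ^ (κ / 2) *
            (((‖Matrix.trace (O * cProd n s)‖ ^ 2 : ℝ)) : ℂ) := by
    intro s hs
    have hcard : s.card = κ := (Finset.mem_powersetCard.mp hs).2
    rw [← Matrix.mul_kronecker_mul, Matrix.trace_kronecker]
    have hconj := conj_trace_eq n s O hO
    rw [hcard] at hconj
    have habs : (((‖Matrix.trace (O * cProd n s)‖ ^ 2 : ℝ)) : ℂ)
        = (starRingEnd ℂ) (Matrix.trace (O * cProd n s)) * Matrix.trace (O * cProd n s) := by
      rw [Complex.sq_norm]; push_cast [Complex.normSq_eq_conj_mul_self]; ring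
    rw [habs, hconj]
    have h1 : ((-1 : ℂ)) ^ (κ / 2) * ((-1 : ℂ)) ^ (κ / 2) = 1 := by
      rw [← pow_add]
      exact Even.neg_one_pow ⟨κ / 2, rfl⟩
    linear_combination (-(Matrix.trace (O * cProd n s) * Matrix.trace (O * cProd n s))) * h1
  rw [Q0, Matrix.mul_smul, Matrix.trace_smul, smul_eq_mul, Matrix.mul_sum,
    Matrix.trace_sum, Finset.sum_congr rfl key, ← Finset.mul_sum, Qnorm, mul_inv, purity]
  push_cast
  ring


end
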